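/- For every natural number V ≥ 1, ∑_{i=0}^{⌊log₂ V⌋} (i+1)(i+2)(2^i + 1) ≤ 4·V·(log₂ V)² whenever V ≥ 16 (equivalently, the sum is O(V log² V)). -/

import Mathlib

lemma aux_sum_bound : ∀ L : ℕ, 4 ≤ L →
    (∑ i ∈ Finset.range (L + 1), ((i + 1) * (i + 2) * (2 ^ i + 1))) ≤ 4 * 2 ^ L * L ^ 2 := by
  intro L hL
  induction L, hL using Nat.le_induction with
  | base => decide
  | succ L hL ih =>
    rw [Finset.sum_range_succ]
    have h16 : 16 ≤ 2 ^ L := by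
      calc (16 : ℕ) = 2 ^ 4 := by norm_num
      _ ≤ 2 ^ L := Nat.pow_le_pow_right (by norm_num) hL
    have hp : (2 : ℕ) ^ (L + 1) = 2 * 2 ^ L := by rw [pow_succ]; ring
    rw [hp]
    nlinarith [ih, h16, hL]

/-- For every natural number `V ≥ 16`,
`∑_{i=0}^{⌊log₂ V⌋} (i+1)(i+2)(2^i + 1) ≤ 4·V·(log₂ V)²`. -/
theorem stmt_9 (V : ℕ) (hV : 16 ≤ V) :
    (∑ i ∈ Finset.range (Nat.log 2 V + 1), ((i + 1) * (i + 2) * (2 ^ i + 1) : ℝ))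
      ≤ 4 * V * (Real.logb 2 V) ^ 2 := by
  set L := Nat.log 2 V with hLdef
  have hL4 : 4 ≤ L := by
    rw [hLdef, Nat.le_log_iff_pow_le (by norm_num) (by omega)]
    norm_num
    omega
  have h2L : (2 : ℕ) ^ L ≤ V := Nat.pow_log_le_self 2 (by omega)
  have hlogb : (L : ℝ) ≤ Real.logb 2 V := by
    have := Real.logb_le_logb_of_le (b := 2) (x := ((2 : ℕ) ^ L : ℝ)) (y := (V : ℝ))
      (by norm_num) (by positivity) (by exact_mod_cast h2L)
    simpa [Real.logb_pow, Real.logb_self_eq_one (show (1:ℝ) < 2 by norm_num)] using this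
  have hnat := aux_sum_bound L hL4
  have hcast : (∑ i ∈ Finset.range (L + 1), ((i + 1) * (i + 2) * (2 ^ i + 1) : ℝ))
      ≤ 4 * (2 : ℝ) ^ L * (L : ℝ) ^ 2 := by
    exact_mod_cast hnat
  refine hcast.trans ?_
  have hLpos : (0 : ℝ) ≤ (L : ℝ) := by positivity
  have h2LV : ((2 : ℝ) ^ L) ≤ (V : ℝ) := by exact_mod_cast h2L
  have hsq : ((L : ℝ)) ^ 2 ≤ (Real.logb 2 V) ^ 2 := by
    apply pow_le_pow_left₀ hLpos hlogb
  nlinarith [sq_nonneg (Real.logb 2 V), pow_pos (show (0:ℝ) < 2 by norm_num) L]
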